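/- Let H and H' be the specific 7×7 matrices with nonnegative integer entries H = [[1,0,1,0,1,0,0],[1,1,1,1,1,0,1],[0,1,1,0,1,1,0],[0,1,0,2,1,0,1],[0,1,0,1,1,0,1],[1,1,0,0,0,1,0],[0,1,1,1,1,1,1]] and H' = [[1,0,1,0,1,0,0],[1,1,0,0,0,1,0],[0,1,1,0,1,1,0],[0,0,0,0,0,0,0],[0,1,1,0,1,1,0],[1,1,0,0,0,1,0],[0,0,0,0,0,0,0]]. Then there is no 7×7 matrix U with entries in the nonnegative integers such that H' = H · U. -/

import Mathlib

/-- The matrix `H` of stable Hom dimensions. -/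
def Hmat : Matrix (Fin 7) (Fin 7) ℤ :=
  !![1,0,1,0,1,0,0;
     1,1,1,1,1,0,1;
     0,1,1,0,1,1,0;
     0,1,0,2,1,0,1;
     0,1,0,1,1,0,1;
     1,1,0,0,0,1,0;
     0,1,1,1,1,1,1]

/-- The matrix `H'` of stable Hom dimensions out of `Ω Y_i`. -/
def Hmat' : Matrix (Fin 7) (Fin 7) ℤ :=
  !![1,0,1,0,1,0,0;
     1,1,0,0,0,1,0;
     0,1,1,0,1,1,0;
     0,0,0,0,0,0,0;
     0,1,1,0,1,1,0;
     1,1,0,0,0,1,0;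
     0,0,0,0,0,0,0]

/-- There is no matrix `U` with nonnegative integer entries such that `H' = H * U`. -/
theorem stmt11 :
    ¬ ∃ U : Matrix (Fin 7) (Fin 7) ℤ, (∀ i j, 0 ≤ U i j) ∧ Hmat' = Hmat * U := by
  rintro ⟨U, hpos, hEq⟩
  have h31 := congrFun (congrFun hEq 3) 1
  have h01 := congrFun (congrFun hEq 0) 1
  have h11 := congrFun (congrFun hEq 1) 1
  simp [Hmat, Hmat', Matrix.mul_apply, Fin.sum_univ_succ, Matrix.cons_val_succ,
    Matrix.cons_val_zero] at h31 h01 h11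
  linarith [hpos 0 1, hpos 1 1, hpos 2 1, hpos 3 1, hpos 4 1,
    hpos 5 1, hpos 6 1]
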